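/- Let S ⊆ ℕ^n be a finitely generated saturated submonoid and let S'' ⊆ S be a finitely generated saturated submonoid. Let R = ⨁_{s ∈ S} R_s be an S-graded commutative ring which is finitely generated as an R₀-algebra. Then the S''-graded subring R'' = ⨁_{s ∈ S''} R_s is finitely generated as an R₀-algebra. -/

import Mathlib

open Finset in
/-- Dickson-type finite generation: a submonoid of `γ → ℕ` closed under truncated
subtraction of smaller elements is generated by a finite set. -/
theorem AddSubmonoid.exists_finset_closure_of_sub_closed {γ : Type*} [Fintype γ]
    (K : AddSubmonoid (γ → ℕ))
    (hsub : ∀ x ∈ K, ∀ y ∈ K, y ≤ x → x - y ∈ K) :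
    ∃ F : Finset (γ → ℕ), (F : Set (γ → ℕ)) ⊆ (K : Set (γ → ℕ)) ∧
      ∀ x ∈ K, x ∈ AddSubmonoid.closure (F : Set (γ → ℕ)) := by
  classical
  set w : (γ → ℕ) → ℕ := fun x => ∑ i, x i with hw
  have hwmono : ∀ {x y : γ → ℕ}, x ≤ y → w x ≤ w y :=
    fun hxy => Finset.sum_le_sum fun i _ => hxy i
  have hweq : ∀ {x y : γ → ℕ}, x ≤ y → w y ≤ w x → x = y := by
    intro x y hxy hw'
    have := (Finset.sum_eq_sum_iff_of_le (fun i (_ : i ∈ univ) => hxy i)).1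
      (le_antisymm (hwmono hxy) hw')
    exact funext fun i => this i (mem_univ i)
  have hwzero : ∀ {x : γ → ℕ}, w x = 0 → x = 0 := by
    intro x hx
    exact funext fun i => Finset.sum_eq_zero_iff.1 hx i (mem_univ i)
  set Min : Set (γ → ℕ) := {p | p ∈ K ∧ p ≠ 0 ∧ ∀ q ∈ K, q ≠ 0 → q ≤ p → q = p} with hMin
  have hanti : IsAntichain (· ≤ ·) Min := by
    intro a ha b hb hne hle
    exact hne (hb.2.2 a ha.1 ha.2.1 hle)
  have hWO : ∀ _ : γ, IsWellOrder ℕ (· < ·) := fun _ => inferInstance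
  have hfin : Min.Finite := hanti.finite_of_partiallyWellOrderedOn
    (Set.isPWO_of_wellQuasiOrderedLE Min)
  refine ⟨hfin.toFinset, ?_, ?_⟩
  · intro p hp
    exact (hfin.mem_toFinset.1 hp).1
  have hdom : ∀ x ∈ K, x ≠ 0 → ∃ q ∈ Min, q ≤ x := by
    intro x hx hx0
    have hQfin : {q | q ∈ K ∧ q ≠ 0 ∧ q ≤ x}.Finite :=
      (Set.finite_Icc (0 : γ → ℕ) x).subset fun q hq => ⟨fun i => Nat.zero_le _, hq.2.2⟩
    obtain ⟨q, hq, hqmin⟩ := Set.exists_min_image _ w hQfin ⟨x, hx, hx0, le_refl x⟩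
    refine ⟨q, ⟨hq.1, hq.2.1, ?_⟩, hq.2.2⟩
    intro q' hq' hq'0 hle
    exact hweq hle (hqmin q' ⟨hq', hq'0, le_trans hle hq.2.2⟩)
  have main : ∀ N, ∀ x ∈ K, w x ≤ N →
      x ∈ AddSubmonoid.closure (hfin.toFinset : Set (γ → ℕ)) := by
    intro N
    induction N with
    | zero =>
      intro x hx hwx
      have : x = 0 := hwzero (Nat.le_zero.1 hwx)
      simpa [this] using zero_mem _
    | succ N ih =>
      intro x hx hwx
      by_cases hx0 : x = 0
      · simpa [hx0] using zero_mem _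
      · obtain ⟨q, hqMin, hqle⟩ := hdom x hx hx0
        have hqK : q ∈ K := hqMin.1
        have hy : x - q ∈ K := hsub x hx q hqK hqle
        have hxy : (x - q) + q = x := funext fun i => Nat.sub_add_cancel (hqle i)
        have hwadd : w (x - q) + w q = w x := by
          rw [← hxy]; simp [hw, Finset.sum_add_distrib]
        have hwq : 1 ≤ w q := by
          rcases Nat.eq_zero_or_pos (w q) with h | h
          · exact absurd (hwzero h) hqMin.2.1
          · exact h
        have hle' : w (x - q) ≤ N := by omega
        have h1 := ih (x - q) hy hle'
        have h2 : q ∈ AddSubmonoid.closure (hfin.toFinset : Set (γ → ℕ)) :=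
          AddSubmonoid.subset_closure (hfin.mem_toFinset.2 hqMin)
        have := add_mem h1 h2
        rwa [hxy] at this
  exact fun x hx => main (w x) x hx le_rfl

theorem prod_pow_mem_graded {R : Type*} [CommRing R] {n : ℕ}
    (A : (Fin n → ℕ) → AddSubgroup R) [GradedRing A]
    {m : ℕ} (x : Fin m → R) (d : Fin m → Fin n → ℕ) (hx : ∀ i, x i ∈ A (d i))
    (e : Fin m → ℕ) : (∏ i, x i ^ e i) ∈ A (∑ i, e i • d i) := by
  classical
  have key : ∀ s : Finset (Fin m), (∏ i ∈ s, x i ^ e i) ∈ A (∑ i ∈ s, e i • d i) := by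
    intro s
    induction s using Finset.induction_on with
    | empty => simpa using SetLike.one_mem_graded A
    | insert _ _ hni ih =>
      rw [Finset.prod_insert hni, Finset.sum_insert hni]
      exact SetLike.mul_mem_graded (SetLike.pow_mem_graded _ (hx _)) ih
  exact key Finset.univ

/-- The set of all finite nonnegative real linear combinations of elements of a set
`S ⊆ ℕⁿ`, viewed inside `ℝⁿ`. -/
def natConeHull {n : ℕ} (S : Set (Fin n → ℕ)) : Set (Fin n → ℝ) :=
  {x | ∃ (k : ℕ) (c : Fin k → ℝ) (s : Fin k → Fin n → ℕ),
    (∀ i, 0 ≤ c i) ∧ (∀ i, s i ∈ S) ∧ x = ∑ i, c i • fun j => ((s i j : ℝ))}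

/-- A submonoid `S ⊆ ℕⁿ` is saturated if `S = S_ℝ ∩ ℕⁿ`. -/
def IsSaturatedSubmonoid {n : ℕ} (S : AddSubmonoid (Fin n → ℕ)) : Prop :=
  ∀ x : Fin n → ℕ, (fun j => ((x j : ℝ))) ∈ natConeHull (S : Set (Fin n → ℕ)) → x ∈ S

/-- For an internally graded ring `R = ⨁ₛ A s`, the subring `⨁_{s ∈ S} A s` spanned by the
homogeneous pieces with degrees in a submonoid `S` (realised as the subring generated by
those pieces). -/
def gradedSubringOn {R : Type*} [CommRing R]
    {n : ℕ} (A : (Fin n → ℕ) → AddSubgroup R) (S : Set (Fin n → ℕ)) : Subring R :=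
  Subring.closure (⋃ s ∈ S, (A s : Set R))

/-- **Finite generation passes to saturated graded subrings.**
Let `S ⊆ ℕⁿ` be a finitely generated saturated submonoid and `S'' ⊆ S` a finitely
generated saturated submonoid. Let `R = ⨁_{s ∈ S} R_s` be an `S`-graded commutative ring
which is finitely generated as an `R₀`-algebra. Then the `S''`-graded subring
`R'' = ⨁_{s ∈ S''} R_s` is finitely generated as an `R₀`-algebra. -/
theorem fg_of_saturated_subMonoid
    {R : Type*} [CommRing R]
    (n : ℕ) (S S'' : AddSubmonoid (Fin n → ℕ))
    (hSfg : S.FG) (hSsat : IsSaturatedSubmonoid S)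
    (hS''fg : S''.FG) (hS''sat : IsSaturatedSubmonoid S'') (hle : S'' ≤ S)
    (A : (Fin n → ℕ) → AddSubgroup R) [GradedRing A]
    (hsupp : ∀ s : Fin n → ℕ, s ∉ S → A s = ⊥)
    (hfg : ∃ T : Finset R, Subring.closure ((A 0 : Set R) ∪ (T : Set R)) = ⊤) :
    ∃ T : Finset R,
      (T : Set R) ⊆ (gradedSubringOn A (S'' : Set (Fin n → ℕ)) : Set R) ∧
      Subring.closure ((A 0 : Set R) ∪ (T : Set R)) =
        gradedSubringOn A (S'' : Set (Fin n → ℕ)) := by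
  classical
  clear hSfg hSsat hS''sat hle hsupp
  obtain ⟨T₀, hT₀⟩ := hfg
  obtain ⟨G'', hG''⟩ := hS''fg
  -- homogeneous components of the typified generators
  set D : Finset ((Fin n → ℕ) × R) := T₀.biUnion (fun t =>
    (DirectSum.decompose A t).support.image
      (fun s => (s, ((DirectSum.decompose A t s : A s) : R)))) with hD
  set m := D.card with hm
  set v : Fin m → (Fin n → ℕ) × R := fun i => ((D.equivFin.symm i : D) : (Fin n → ℕ) × R)
    with hv
  set d : Fin m → (Fin n → ℕ) := fun i => (v i).1 with hd
  set x : Fin m → R := fun i => (v i).2 with hx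
  have hvD : ∀ i, v i ∈ D := fun i => (D.equivFin.symm i).2
  have hxA : ∀ i, x i ∈ A (d i) := by
    intro i
    obtain ⟨t, ht, hmem⟩ := Finset.mem_biUnion.1 (hvD i)
    obtain ⟨s, hs, heq⟩ := Finset.mem_image.1 hmem
    have h1 : d i = s := congrArg Prod.fst heq.symm
    have h2 : x i = ((DirectSum.decompose A t s : A s) : R) := congrArg Prod.snd heq.symm
    rw [h1, h2]
    exact (DirectSum.decompose A t s).2
  -- monomials and degrees
  set φ : (Fin m → ℕ) → (Fin n → ℕ) := fun e => ∑ i, e i • d i with hφ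
  set μ : (Fin m → ℕ) → R := fun e => ∏ i, x i ^ e i with hμ
  have hμA : ∀ e, μ e ∈ A (φ e) := fun e => prod_pow_mem_graded A x d hxA e
  have hφadd : ∀ e f, φ (e + f) = φ e + φ f := by
    intro e f; simp only [hφ, Pi.add_apply, add_smul, Finset.sum_add_distrib]
  have hμadd : ∀ e f, μ (e + f) = μ e * μ f := by
    intro e f; simp only [hμ, Pi.add_apply, pow_add, Finset.prod_mul_distrib]
  have hμzero : μ 0 = 1 := by simp [hμ]
  have hμsingle : ∀ i, μ (Pi.single i 1) = x i := by
    intro i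
    simp only [hμ]
    rw [Finset.prod_eq_single i]
    · simp
    · intro j _ hj; simp [Pi.single_eq_of_ne hj]
    · intro h; exact absurd (Finset.mem_univ i) h
  -- generators of S''
  set k := G''.card with hk
  set g : Fin k → (Fin n → ℕ) := fun j => ((G''.equivFin.symm j : G'') : (Fin n → ℕ)) with hg
  have hgS'' : ∀ j, g j ∈ S'' := by
    intro j
    rw [← hG'']
    exact AddSubmonoid.subset_closure (G''.equivFin.symm j).2
  set ψ : (Fin k → ℕ) → (Fin n → ℕ) := fun a => ∑ j, a j • g j with hψ
  have hψadd : ∀ a b, ψ (a + b) = ψ a + ψ b := by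
    intro a b; simp only [hψ, Pi.add_apply, add_smul, Finset.sum_add_distrib]
  have hψS'' : ∀ a, ψ a ∈ S'' :=
    fun a => sum_mem (fun j _ => AddSubmonoid.nsmul_mem S'' (hgS'' j) _)
  have hrep : ∀ s ∈ S'', ∃ a, ψ a = s := by
    intro s hs
    rw [← hG''] at hs
    induction hs using AddSubmonoid.closure_induction with
    | mem y hy =>
      refine ⟨Pi.single (G''.equivFin ⟨y, hy⟩) 1, ?_⟩
      simp only [hψ]
      rw [Finset.sum_eq_single (G''.equivFin ⟨y, hy⟩)]
      · simp [hg]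
      · intro j _ hj; simp [Pi.single_eq_of_ne hj]
      · intro h; exact absurd (Finset.mem_univ _) h
    | zero => exact ⟨0, by simp only [hψ, Pi.zero_apply, zero_smul, Finset.sum_const_zero]⟩
    | add a b _ _ iha ihb =>
      obtain ⟨a1, ha1⟩ := iha
      obtain ⟨a2, ha2⟩ := ihb
      exact ⟨a1 + a2, by rw [hψadd, ha1, ha2]⟩
  -- the exponent monoid
  set K : AddSubmonoid ((Fin m ⊕ Fin k) → ℕ) :=
    { carrier := {u | φ (fun i => u (Sum.inl i)) = ψ (fun j => u (Sum.inr j))}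
      zero_mem' := by
        show φ 0 = ψ 0
        simp only [hφ, hψ, Pi.zero_apply, zero_smul, Finset.sum_const_zero]
      add_mem' := by
        intro u u' hu hu'
        show φ ((fun i => u (Sum.inl i)) + (fun i => u' (Sum.inl i)))
          = ψ ((fun j => u (Sum.inr j)) + (fun j => u' (Sum.inr j)))
        rw [hφadd, hψadd, hu, hu'] } with hK
  have hKmem : ∀ u : (Fin m ⊕ Fin k) → ℕ,
      u ∈ K ↔ φ (fun i => u (Sum.inl i)) = ψ (fun j => u (Sum.inr j)) := fun u => Iff.rfl
  have hKsub : ∀ p ∈ K, ∀ q ∈ K, q ≤ p → p - q ∈ K := by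
    intro p hp q hq hle
    rw [hKmem] at hp hq ⊢
    have e1 : ((fun i => p (Sum.inl i)) - (fun i => q (Sum.inl i)))
        + (fun i => q (Sum.inl i)) = fun i => p (Sum.inl i) :=
      funext fun i => Nat.sub_add_cancel (hle _)
    have e2 : ((fun j => p (Sum.inr j)) - (fun j => q (Sum.inr j)))
        + (fun j => q (Sum.inr j)) = fun j => p (Sum.inr j) :=
      funext fun j => Nat.sub_add_cancel (hle _)
    have h1 : φ ((fun i => p (Sum.inl i)) - (fun i => q (Sum.inl i)))
        + φ (fun i => q (Sum.inl i)) = φ (fun i => p (Sum.inl i)) := by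
      rw [← hφadd, e1]
    have h2 : ψ ((fun j => p (Sum.inr j)) - (fun j => q (Sum.inr j)))
        + ψ (fun j => q (Sum.inr j)) = ψ (fun j => p (Sum.inr j)) := by
      rw [← hψadd, e2]
    have key : φ ((fun i => p (Sum.inl i)) - (fun i => q (Sum.inl i)))
        = ψ ((fun j => p (Sum.inr j)) - (fun j => q (Sum.inr j))) := by
      have := h1.trans hp
      rw [← h2, hq] at this
      exact add_right_cancel this
    exact key
  obtain ⟨F', hF'sub, hF'gen⟩ := AddSubmonoid.exists_finset_closure_of_sub_closed K hKsub
  set F : Finset (Fin m → ℕ) := F'.image (fun u => fun i => u (Sum.inl i)) with hF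
  have hFS'' : ∀ f ∈ F, φ f ∈ S'' := by
    intro f hf
    obtain ⟨u, hu, rfl⟩ := Finset.mem_image.1 hf
    have hu' : u ∈ K := hF'sub hu
    rw [hKmem] at hu'
    rw [hu']
    exact hψS'' _
  set π : ((Fin m ⊕ Fin k) → ℕ) →+ (Fin m → ℕ) :=
    { toFun := fun u i => u (Sum.inl i), map_zero' := rfl, map_add' := fun _ _ => rfl }
    with hπ
  have hEgen : ∀ e, φ e ∈ S'' → e ∈ AddSubmonoid.closure (F : Set (Fin m → ℕ)) := by
    intro e he
    obtain ⟨a, ha⟩ := hrep _ he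
    have hu : Sum.elim e a ∈ K := by
      rw [hKmem]
      exact ha.symm
    have hu' := hF'gen _ hu
    have hmap : π (Sum.elim e a) ∈ AddSubmonoid.map π
        (AddSubmonoid.closure (F' : Set ((Fin m ⊕ Fin k) → ℕ))) := ⟨_, hu', rfl⟩
    rw [AddMonoidHom.map_mclosure] at hmap
    have himg : π '' (F' : Set ((Fin m ⊕ Fin k) → ℕ)) = (F : Set (Fin m → ℕ)) := by
      rw [hF, Finset.coe_image]; rfl
    rw [himg] at hmap
    exact hmap
  set T : Finset R := F.image μ with hT
  have hTsub : (T : Set R) ⊆ (gradedSubringOn A (S'' : Set (Fin n → ℕ)) : Set R) := by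
    intro r hr
    obtain ⟨f, hf, rfl⟩ := Finset.mem_image.1 hr
    apply Subring.subset_closure
    exact Set.mem_iUnion₂.2 ⟨φ f, hFS'' f hf, hμA f⟩
  set W : Subring R := Subring.closure ((A 0 : Set R) ∪ (T : Set R)) with hW
  have hA0W : ∀ a ∈ A 0, a ∈ W := fun a ha => Subring.subset_closure (Or.inl ha)
  have hμW : ∀ e ∈ AddSubmonoid.closure (F : Set (Fin m → ℕ)), μ e ∈ W := by
    intro e he
    induction he using AddSubmonoid.closure_induction with
    | mem f hf =>
      exact Subring.subset_closure (Or.inr (Finset.mem_coe.2 (Finset.mem_image_of_mem μ hf)))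
    | zero => rw [hμzero]; exact one_mem W
    | add p q _ _ ihp ihq => rw [hμadd]; exact mul_mem ihp ihq
  -- every element of `R` is an additive combination of `a * μ e`
  set Gset : Set R := {r | ∃ a ∈ A 0, ∃ e, r = a * μ e} with hGset
  have hGone : (1 : R) ∈ Gset := ⟨1, SetLike.one_mem_graded A, 0, by rw [hμzero, mul_one]⟩
  have hGneg : ∀ r ∈ AddSubmonoid.closure Gset, -r ∈ AddSubmonoid.closure Gset := by
    intro r hr
    induction hr using AddSubmonoid.closure_induction with
    | mem y hy =>
      obtain ⟨a, ha, e, rfl⟩ := hy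
      exact AddSubmonoid.subset_closure ⟨-a, neg_mem ha, e, by ring⟩
    | zero => simpa using zero_mem _
    | add y z _ _ ihy ihz => rw [neg_add]; exact add_mem ihy ihz
  have hGmul : ∀ r ∈ AddSubmonoid.closure Gset, ∀ r' ∈ AddSubmonoid.closure Gset,
      r * r' ∈ AddSubmonoid.closure Gset := by
    intro r hr
    induction hr using AddSubmonoid.closure_induction with
    | mem y hy =>
      intro r' hr'
      induction hr' using AddSubmonoid.closure_induction with
      | mem y' hy' =>
        obtain ⟨a, ha, e, rfl⟩ := hy
        obtain ⟨a', ha', e', rfl⟩ := hy'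
        apply AddSubmonoid.subset_closure
        refine ⟨a * a', ?_, e + e', by rw [hμadd]; ring⟩
        have := SetLike.mul_mem_graded ha ha'
        rwa [zero_add] at this
      | zero => simpa using zero_mem _
      | add z z' _ _ ihz ihz' => rw [mul_add]; exact add_mem ihz ihz'
    | zero => intro r' _; simpa using zero_mem _
    | add y z _ _ ihy ihz =>
      intro r' hr'
      rw [add_mul]
      exact add_mem (ihy r' hr') (ihz r' hr')
  have htopG : ∀ r : R, r ∈ AddSubmonoid.closure Gset := by
    intro r
    have hr : r ∈ Subring.closure ((A 0 : Set R) ∪ Set.range x) := by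
      have hle2 : Subring.closure ((A 0 : Set R) ∪ (T₀ : Set R))
          ≤ Subring.closure ((A 0 : Set R) ∪ Set.range x) := by
        rw [Subring.closure_le]
        rintro y (hy | hy)
        · exact Subring.subset_closure (Or.inl hy)
        · have hsum := DirectSum.sum_support_decompose A y
          rw [← hsum]
          apply sum_mem
          intro s hs
          have hmemD : (s, ((DirectSum.decompose A y s : A s) : R)) ∈ D :=
            Finset.mem_biUnion.2 ⟨y, hy, Finset.mem_image_of_mem _ hs⟩
          have hxi : x (D.equivFin ⟨_, hmemD⟩) = ((DirectSum.decompose A y s : A s) : R) := by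
            simp [hx, hv]
          rw [← hxi]
          exact Subring.subset_closure (Or.inr ⟨_, rfl⟩)
      rw [hT₀] at hle2
      exact hle2 (Subring.mem_top r)
    induction hr using Subring.closure_induction with
    | mem y hy =>
      rcases hy with hy | ⟨i, rfl⟩
      · exact AddSubmonoid.subset_closure ⟨y, hy, 0, by rw [hμzero, mul_one]⟩
      · exact AddSubmonoid.subset_closure
          ⟨1, SetLike.one_mem_graded A, Pi.single i 1, by rw [hμsingle, one_mul]⟩
    | zero => exact zero_mem _
    | one => exact AddSubmonoid.subset_closure hGone
    | add y z _ _ ihy ihz => exact add_mem ihy ihz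
    | neg y _ ihy => exact hGneg y ihy
    | mul y z hy hz ihy ihz => exact hGmul y ihy z ihz
  -- homogeneous projections in degrees from `S''` land in `W`
  have hproj : ∀ r : R, ∀ s ∈ S'', ((DirectSum.decompose A r s : A s) : R) ∈ W := by
    intro r
    have hr := htopG r
    induction hr using AddSubmonoid.closure_induction with
    | mem y hy =>
      intro s hs
      obtain ⟨a, ha, e, rfl⟩ := hy
      have hmem : a * μ e ∈ A (φ e) := by
        have := SetLike.mul_mem_graded ha (hμA e)
        rwa [zero_add] at this
      by_cases hse : φ e = s
      · rw [DirectSum.decompose_of_mem_same A (hse ▸ hmem)]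
        exact mul_mem (hA0W a ha) (hμW e (hEgen e (hse ▸ hs)))
      · rw [DirectSum.decompose_of_mem_ne A hmem hse]
        exact zero_mem W
    | zero =>
      intro s hs
      rw [DirectSum.decompose_zero]
      simpa using zero_mem W
    | add y z _ _ ihy ihz =>
      intro s hs
      rw [DirectSum.decompose_add]
      have : ((DirectSum.decompose A y s : A s) : R) + ((DirectSum.decompose A z s : A s) : R)
          ∈ W := add_mem (ihy s hs) (ihz s hs)
      simpa using this
  refine ⟨T, hTsub, le_antisymm ?_ ?_⟩
  · rw [Subring.closure_le]
    rintro y (hy | hy)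
    · exact Subring.subset_closure (Set.mem_iUnion₂.2 ⟨0, zero_mem S'', hy⟩)
    · exact hTsub hy
  · rw [gradedSubringOn, Subring.closure_le]
    intro y hy
    obtain ⟨s, hs, hys⟩ := Set.mem_iUnion₂.1 hy
    have := hproj y s hs
    rwa [DirectSum.decompose_of_mem_same A hys] at this
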